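/- For every m ≥ 1, the multivariate polynomial F_m = f_m − v·∂f_m/∂v · c ∈ ℚ[v, α_1, …, α_m], obtained from f_m = ∏_{i=1}^m (α_i^2 + v/c) with rational c > 1, i.e., F_m(v, α_1^2, …, α_m^2) where F_m(v, a_1, …, a_m) = ∑_{k=0}^m E_{m−k}(a)(1−ck)(v/c)^k, is irreducible as a polynomial in the m+1 variables v, α_1, …, α_m over ℚ. -/

import Mathlib

open Polynomial in

lemma quad_eisenstein {S : Type*} [CommRing S] [IsDomain S] (π u : S)
    (hπ : Prime π) (hu : IsUnit u) :
    Irreducible (Polynomial.X ^ 2 + Polynomial.C (u * π) : Polynomial S) := by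
  set p : Polynomial S := X ^ 2 + C (u * π) with hp
  have hmonic : p.Monic := by rw [hp]; exact monic_X_pow_add_C (a := u * π) two_ne_zero
  have hnat : p.natDegree = 2 := by rw [hp]; compute_degree!
  have hprime : (Ideal.span {π}).IsPrime := (Ideal.span_singleton_prime hπ.ne_zero).mpr hπ
  have hcoeff0 : p.coeff 0 = u * π := by simp [hp, coeff_X_pow]
  have heis : p.IsEisensteinAt (Ideal.span {π}) := by
    constructor
    · rw [hmonic.leadingCoeff]
      intro h
      exact hπ.not_unit (isUnit_of_dvd_one ((Ideal.mem_span_singleton.mp h)))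
    · intro n hn
      rw [hnat] at hn
      interval_cases n
      · rw [hcoeff0]
        exact Ideal.mem_span_singleton.mpr (Dvd.dvd.mul_left dvd_rfl u)
      · have h1 : p.coeff 1 = 0 := by simp [hp, coeff_X_pow]
        rw [h1]; exact Ideal.zero_mem _
    · rw [hcoeff0, Ideal.span_singleton_pow, Ideal.mem_span_singleton]
      intro h
      have hdvd : π ∣ u := by
        rcases h with ⟨t, ht⟩
        exact ⟨t, mul_right_cancel₀ hπ.ne_zero (by linear_combination ht : u * π = π * t * π)⟩
      exact hπ.not_unit (isUnit_of_dvd_unit hdvd hu)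
  exact heis.irreducible hprime hmonic.isPrimitive (by rw [hnat]; norm_num)

open MvPolynomial

-- product rule for pderiv
lemma pderiv_finset_prod {σ ι : Type*} [DecidableEq ι] (n : σ) (s : Finset ι)
    (f : ι → MvPolynomial σ ℚ) :
    pderiv n (∏ i ∈ s, f i) = ∑ i ∈ s, pderiv n (f i) * ∏ k ∈ s.erase i, f k := by
  induction s using Finset.induction_on with
  | empty => simp
  | @insert a s ha ih =>
    rw [Finset.prod_insert ha, pderiv_mul, ih, Finset.sum_insert ha, Finset.erase_insert ha,
      Finset.mul_sum]
    congr 1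
    apply Finset.sum_congr rfl
    intro i hi
    have hia : a ≠ i := by rintro rfl; exact ha hi
    rw [Finset.erase_insert_of_ne hia, Finset.prod_insert (fun h => ha (Finset.mem_of_mem_erase h))]
    ring

-- primality of X in MvPolynomial over ℚ
lemma mv_prime_X {τ : Type*} [DecidableEq τ] (t : τ) : Prime (X t : MvPolynomial τ ℚ) := by
  let Ψ := (renameEquiv ℚ (Equiv.optionSubtypeNe t).symm).trans (optionEquivLeft ℚ {b : τ // b ≠ t})
  have h : Ψ (X t) = Polynomial.X := by
    simp [Ψ, renameEquiv_apply, rename_X, Equiv.optionSubtypeNe_symm_self, optionEquivLeft_X_none]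
  exact (MulEquiv.prime_iff (p := X t) Ψ).mp (h ▸ Polynomial.prime_X)

open MvPolynomial in
lemma mv_quad_irred {τ : Type*} [DecidableEq τ] (i j : τ) (hij : j ≠ i) (a : ℚ) (ha : a ≠ 0) :
    Irreducible (X i ^ 2 + C a * X j : MvPolynomial τ ℚ) := by
  let Ψ := (renameEquiv ℚ (Equiv.optionSubtypeNe i).symm).trans (optionEquivLeft ℚ {b : τ // b ≠ i})
  apply (MulEquiv.irreducible_iff Ψ).mp
  have h : Ψ (X i ^ 2 + C a * X j) =
      Polynomial.X ^ 2 + Polynomial.C ((C a : MvPolynomial {b : τ // b ≠ i} ℚ) * X ⟨j, hij⟩) := by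
    simp [Ψ, renameEquiv_apply, rename_X, Equiv.optionSubtypeNe_symm_self,
      Equiv.optionSubtypeNe_symm_of_ne hij, optionEquivLeft_X_none, optionEquivLeft_X_some,
      optionEquivLeft_C, map_pow, map_mul, map_add]
  rw [h]
  exact quad_eisenstein _ _ (mv_prime_X _)
    (IsUnit.map (C : ℚ →+* MvPolynomial {b : τ // b ≠ i} ℚ) (isUnit_iff_ne_zero.mpr ha))



open MvPolynomial
open scoped BigOperators

set_option maxHeartbeats 1600000 in
/-- Irreducibility of `F_m(v, α_1^2, …, α_m^2) = f_m - c·v·∂f_m/∂v` where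
`f_m = ∏_{i=1}^m (α_i^2 + v/c)`, as a multivariate polynomial in the `m + 1`
variables `v, α_1, …, α_m` over `ℚ` (the variable `v` is `X none` and `α_i` is
`X (some i)`), for any rational `c > 1` and any `m ≥ 1`. -/
theorem F_multivariate_irreducible (m : ℕ) (hm : 1 ≤ m) (c : ℚ) (hc : 1 < c) :
    Irreducible
      ((∏ i : Fin m, ((X (some i)) ^ 2 + C (1 / c) * X none) :
          MvPolynomial (Option (Fin m)) ℚ) -
        C c * X none *
          pderiv none (∏ i : Fin m, ((X (some i)) ^ 2 + C (1 / c) * X none))) := by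
  classical
  have hc0 : c ≠ 0 := by positivity
  have h1c : (1 / c : ℚ) ≠ 0 := one_div_ne_zero hc0
  set j : Fin m := ⟨0, hm⟩ with hj
  set e : Option (Fin m) ≃ Option (Fin m) := Equiv.swap none (some j) with he
  set Φ := (renameEquiv ℚ e).trans (optionEquivLeft ℚ (Fin m)) with hΦ
  apply (MulEquiv.irreducible_iff Φ).mp
  set U : MvPolynomial (Option (Fin m)) ℚ := X (some j) ^ 2 + C (1 / c) * X none with hU
  set gb : MvPolynomial (Option (Fin m)) ℚ :=
    ∏ i ∈ Finset.univ.erase j, (X (some i) ^ 2 + C (1 / c) * X none) with hgb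
  set db := pderiv none gb with hdb
  have hpfac : ∀ i : Fin m,
      pderiv none (X (some i) ^ 2 + C (1 / c) * X none : MvPolynomial (Option (Fin m)) ℚ)
        = C (1 / c) := fun i => by simp [pderiv_X]
  have h1up : (C c : MvPolynomial (Option (Fin m)) ℚ) * C (1 / c) = 1 := by
    rw [← C_mul, mul_one_div_cancel hc0, C_1]
  have hFeq : (∏ i : Fin m, (X (some i) ^ 2 + C (1 / c) * X none) :
        MvPolynomial (Option (Fin m)) ℚ) -
        C c * X none * pderiv none (∏ i : Fin m, (X (some i) ^ 2 + C (1 / c) * X none)) =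
      U * (gb - C c * X none * db) - X none * gb := by
    have hprod : (∏ i : Fin m, (X (some i) ^ 2 + C (1 / c) * X none) :
        MvPolynomial (Option (Fin m)) ℚ) = U * gb :=
      (Finset.mul_prod_erase _ _ (Finset.mem_univ j)).symm
    rw [hprod, pderiv_mul, hpfac j, hdb]
    linear_combination (-(X none * gb)) * h1up
  rw [hFeq]
  -- base ring data
  set g0 : MvPolynomial (Fin m) ℚ :=
    ∏ k ∈ Finset.univ.erase j, (X k ^ 2 + C (1 / c) * X j) with hg0
  set d0 : MvPolynomial (Fin m) ℚ := ∑ i ∈ Finset.univ.erase j,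
      C (1 / c) * ∏ k ∈ (Finset.univ.erase j).erase i, (X k ^ 2 + C (1 / c) * X j) with hd0
  set A : MvPolynomial (Fin m) ℚ := g0 - C c * X j * d0 with hA
  set B : MvPolynomial (Fin m) ℚ := C (1 / c) * X j * A - X j * g0 with hB
  -- values of Φ
  have hΦXnone : Φ (X none) = Polynomial.C (X j) := by
    rw [hΦ, AlgEquiv.trans_apply, renameEquiv_apply, rename_X, he, Equiv.swap_apply_left,
      optionEquivLeft_X_some]
  have hΦXjv : Φ (X (some j)) = Polynomial.X := by
    rw [hΦ, AlgEquiv.trans_apply, renameEquiv_apply, rename_X, he, Equiv.swap_apply_right,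
      optionEquivLeft_X_none]
  have hΦXk : ∀ k : Fin m, k ≠ j → Φ (X (some k)) = Polynomial.C (X k) := by
    intro k hk
    rw [hΦ, AlgEquiv.trans_apply, renameEquiv_apply, rename_X, he,
      Equiv.swap_apply_of_ne_of_ne (by simp) (by simp [hk]), optionEquivLeft_X_some]
  have hΦC : ∀ a : ℚ, Φ (C a) = Polynomial.C (C a) := by
    intro a
    rw [hΦ, AlgEquiv.trans_apply, renameEquiv_apply, rename_C, optionEquivLeft_C]
  have hfac : ∀ k : Fin m, k ≠ j → Φ (X (some k) ^ 2 + C (1 / c) * X none)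
      = Polynomial.C (X k ^ 2 + C (1 / c) * X j) := by
    intro k hk
    rw [map_add, map_pow, map_mul, hΦXk k hk, hΦXnone, hΦC, map_add, map_pow, map_mul]
  have hΦgb : Φ gb = Polynomial.C g0 := by
    rw [hgb, map_prod, hg0, map_prod]
    exact Finset.prod_congr rfl fun k hk => hfac k (Finset.ne_of_mem_erase hk)
  have hΦdb : Φ db = Polynomial.C d0 := by
    rw [hdb, hgb, pderiv_finset_prod, hd0, map_sum, map_sum]
    apply Finset.sum_congr rfl
    intro i hi
    rw [hpfac i, map_mul, map_mul, hΦC, map_prod, map_prod]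
    congr 1
    exact Finset.prod_congr rfl fun k hk =>
      hfac k (Finset.ne_of_mem_erase (Finset.mem_of_mem_erase hk))
  have key : Φ (U * (gb - C c * X none * db) - X none * gb)
      = Polynomial.C A * Polynomial.X ^ 2 + Polynomial.C B := by
    have hCA : (Polynomial.C A : Polynomial (MvPolynomial (Fin m) ℚ)) =
        Polynomial.C g0 - Polynomial.C (C c) * Polynomial.C (X j) * Polynomial.C d0 := by
      rw [hA]; simp only [map_sub, map_mul]
    have hCB : (Polynomial.C B : Polynomial (MvPolynomial (Fin m) ℚ)) =
        Polynomial.C (C (1 / c)) * Polynomial.C (X j) * Polynomial.C A -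
          Polynomial.C (X j) * Polynomial.C g0 := by
      rw [hB]; simp only [map_sub, map_mul]
    rw [hU, hCB, hCA]
    simp only [map_sub, map_mul, map_add, map_pow, hΦXnone, hΦXjv, hΦC, hΦgb, hΦdb]
    ring
  rw [key]
  -- evaluation φ : X j ↦ 0
  set φ : MvPolynomial (Fin m) ℚ →ₐ[ℚ] MvPolynomial (Fin m) ℚ :=
    aeval (fun k => if k = j then 0 else X k) with hφ
  have hφXj : φ (X j) = 0 := by simp [hφ]
  have hφC : ∀ a : ℚ, φ (C a) = C a := fun a => by simp [hφ]
  have hφg0 : φ g0 = ∏ k ∈ Finset.univ.erase j, X k ^ 2 := by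
    rw [hg0, map_prod]
    apply Finset.prod_congr rfl
    intro k hk
    rw [map_add, map_pow, map_mul, hφXj, hφC, mul_zero, add_zero]
    congr 1
    simp [hφ, Finset.ne_of_mem_erase hk]
  have hφg0ne : φ g0 ≠ 0 := by
    rw [hφg0]
    exact Finset.prod_ne_zero_iff.mpr fun k _ => pow_ne_zero _ (X_ne_zero k)
  have hφA : φ A = φ g0 := by
    rw [hA, map_sub, map_mul, map_mul, hφXj, mul_zero, zero_mul, sub_zero]
  have hAne : A ≠ 0 := fun h => hφg0ne (by rw [← hφA, h, map_zero])
  have hnd : ¬ (X j : MvPolynomial (Fin m) ℚ) ∣ A := by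
    rintro ⟨t, ht⟩
    apply hφg0ne
    rw [← hφA, ht, map_mul, hφXj, zero_mul]
  set p : Polynomial (MvPolynomial (Fin m) ℚ) :=
    Polynomial.C A * Polynomial.X ^ 2 + Polynomial.C B with hp
  have hdeg : p.degree = 2 := by
    have h1 : (Polynomial.C A * Polynomial.X ^ 2 : Polynomial (MvPolynomial (Fin m) ℚ)).degree
        = 2 := Polynomial.degree_C_mul_X_pow 2 hAne
    rw [hp, Polynomial.degree_add_eq_left_of_degree_lt
      (by rw [h1]; exact lt_of_le_of_lt Polynomial.degree_C_le (by norm_num)), h1]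
  have hnat : p.natDegree = 2 := Polynomial.natDegree_eq_of_degree_eq_some hdeg
  have hcf2 : p.coeff 2 = A := by simp [hp, Polynomial.coeff_X_pow]
  have hcf1 : p.coeff 1 = 0 := by simp [hp, Polynomial.coeff_X_pow]
  have hcf0 : p.coeff 0 = B := by simp [hp, Polynomial.coeff_X_pow]
  have hlead : p.leadingCoeff = A := by rw [Polynomial.leadingCoeff, hnat, hcf2]
  have hXjprime : Prime (X j : MvPolynomial (Fin m) ℚ) := mv_prime_X j
  have hXjne : (X j : MvPolynomial (Fin m) ℚ) ≠ 0 := hXjprime.ne_zero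
  have hBfac : B = X j * (C (1 / c) * A - g0) := by rw [hB]; ring
  have heis : p.IsEisensteinAt (Ideal.span {X j}) := by
    constructor
    · rw [hlead]
      exact fun h => hnd (Ideal.mem_span_singleton.mp h)
    · intro n hn
      rw [hnat] at hn
      interval_cases n
      · rw [hcf0]
        exact Ideal.mem_span_singleton.mpr ⟨_, hBfac⟩
      · rw [hcf1]; exact Ideal.zero_mem _
    · rw [hcf0, Ideal.span_singleton_pow, Ideal.mem_span_singleton]
      rintro ⟨t, ht⟩
      have h2 : C (1 / c) * A - g0 = X j * t := by
        apply mul_left_cancel₀ hXjne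
        rw [← hBfac, ht]; ring
      have h3 := congrArg φ h2
      rw [map_sub, map_mul, map_mul, hφXj, zero_mul, hφA, hφC] at h3
      have h4 : (C (1 / c) - 1) * φ g0 = 0 := by linear_combination h3
      rcases mul_eq_zero.mp h4 with h5 | h5
      · have h6 : ((1 : ℚ) / c - 1) = 0 := by
          rw [← C_eq_zero (σ := Fin m), map_sub, C_1]
          exact h5
        have h7 : (1 / c : ℚ) < 1 := by
          rw [div_lt_one (by linarith)]; exact hc
        linarith
      · exact hφg0ne h5
  have hprim : p.IsPrimitive := by
    intro r hr
    by_contra hru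
    have hrA : r ∣ A := by
      have := (Polynomial.C_dvd_iff_dvd_coeff r p).mp hr 2
      rwa [hcf2] at this
    have hrB : r ∣ B := by
      have := (Polynomial.C_dvd_iff_dvd_coeff r p).mp hr 0
      rwa [hcf0] at this
    have hr0 : r ≠ 0 := by rintro rfl; exact hAne (zero_dvd_iff.mp hrA)
    obtain ⟨q, hqirr, hqr⟩ := WfDvdMonoid.exists_irreducible_factor hru hr0
    have hq : Prime q := UniqueFactorizationMonoid.irreducible_iff_prime.mp hqirr
    have hqA : q ∣ A := hqr.trans hrA
    have hqB : q ∣ X j * (C (1 / c) * A - g0) := by rw [← hBfac]; exact hqr.trans hrB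
    rcases hq.2.2 _ _ hqB with h | h
    · exact hnd ((hqirr.dvd_symm hXjprime.irreducible h).trans hqA)
    · have hqg0 : q ∣ g0 := by
        have hg : g0 = C (1 / c) * A - (C (1 / c) * A - g0) := by ring
        rw [hg]
        exact dvd_sub (hqA.mul_left _) h
      rw [hg0] at hqg0
      obtain ⟨i, hi, hqi⟩ := hq.exists_mem_finset_dvd hqg0
      have hij : i ≠ j := Finset.ne_of_mem_erase hi
      have hui : Irreducible (X i ^ 2 + C (1 / c) * X j : MvPolynomial (Fin m) ℚ) :=
        mv_quad_irred i j hij.symm (1 / c) h1c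
      have huiA : (X i ^ 2 + C (1 / c) * X j : MvPolynomial (Fin m) ℚ) ∣ A :=
        (hqirr.dvd_symm hui hqi).trans hqA
      set ψ : MvPolynomial (Fin m) ℚ →ₐ[ℚ] MvPolynomial (Fin m) ℚ :=
        aeval (fun k => if k = j then -(C c * X i ^ 2) else X k) with hψ
      have hψXj : ψ (X j) = -(C c * X i ^ 2) := by simp [hψ]
      have hψC : ∀ a : ℚ, ψ (C a) = C a := fun a => by simp [hψ]
      have hCc : (C (1 / c) : MvPolynomial (Fin m) ℚ) * C c = 1 := by
        rw [← C_mul, one_div_mul_cancel hc0, C_1]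
      have hψfac : ∀ k : Fin m, k ≠ j →
          ψ (X k ^ 2 + C (1 / c) * X j) = X k ^ 2 - X i ^ 2 := by
        intro k hk
        have hXk : ψ (X k) = X k := by simp [hψ, hk]
        rw [map_add, map_pow, map_mul, hψXj, hψC, hXk]
        linear_combination (-(X i ^ 2)) * hCc
      have hψg0 : ψ g0 = 0 := by
        rw [hg0, map_prod]
        apply Finset.prod_eq_zero hi
        rw [hψfac i hij]; ring
      have hψd0 : ψ d0 = C (1 / c) * ∏ k ∈ (Finset.univ.erase j).erase i,
          (X k ^ 2 - X i ^ 2) := by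
        rw [hd0, map_sum, Finset.sum_eq_single_of_mem i hi]
        · rw [map_mul, map_prod, hψC]
          congr 1
          exact Finset.prod_congr rfl fun k hk =>
            hψfac k (Finset.ne_of_mem_erase (Finset.mem_of_mem_erase hk))
        · intro b hb hbne
          rw [map_mul, map_prod]
          apply mul_eq_zero_of_right
          apply Finset.prod_eq_zero (Finset.mem_erase.mpr ⟨Ne.symm hbne, hi⟩)
          rw [hψfac i hij]; ring
      have hXXne : ∀ k : Fin m, k ≠ i →
          (X k ^ 2 - X i ^ 2 : MvPolynomial (Fin m) ℚ) ≠ 0 := by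
        intro k hk h
        have h' := congrArg (eval (fun t => if t = k then (1 : ℚ) else 0)) h
        simp [hk, Ne.symm hk] at h'
      have hψd0ne : ψ d0 ≠ 0 := by
        rw [hψd0]
        refine mul_ne_zero (fun h => h1c (C_eq_zero.mp h)) ?_
        exact Finset.prod_ne_zero_iff.mpr fun k hk => hXXne k (Finset.ne_of_mem_erase hk)
      have hψA : ψ A = C c * C c * X i ^ 2 * ψ d0 := by
        rw [hA, map_sub, map_mul, map_mul, hψXj, hψg0, hψC]; ring
      have hψAne : ψ A ≠ 0 := by
        rw [hψA]
        exact mul_ne_zero (mul_ne_zero (mul_ne_zero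
          (fun h => hc0 (by simpa using h)) (fun h => hc0 (by simpa using h)))
          (pow_ne_zero _ (X_ne_zero i))) hψd0ne
      rcases huiA with ⟨t, ht⟩
      apply hψAne
      have hui0 : ψ (X i ^ 2 + C (1 / c) * X j) = 0 := by rw [hψfac i hij]; ring
      rw [ht, map_mul, hui0, zero_mul]
  exact heis.irreducible ((Ideal.span_singleton_prime hXjne).mpr hXjprime) hprim
    (by rw [hnat]; norm_num)
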